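/- Let γ > 0 and fix x_D ∈ ℝ. For every x* ∈ ℝ, set d = |x_D − x*|. Then the second derivative of the function y ↦ f_γ(x_D − y) at the point x* equals (5/(3γ²))·(5d²/γ² − 1 − √5·d/γ)·exp(−√5·d/γ). -/

import Mathlib

open Real Filter Asymptotics

/-- The Matérn-5/2 correlation function with range parameter `γ`. -/
noncomputable def matern52 (γ : ℝ) (t : ℝ) : ℝ :=
  (1 + Real.sqrt 5 * |t| / γ + 5 * t ^ 2 / (3 * γ ^ 2)) * Real.exp (-(Real.sqrt 5 * |t| / γ))


lemma helper1 {H : ℝ → ℝ} {c : ℝ} (hH : ContinuousAt H c) :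
    HasDerivAt (fun y => (y - c) * H y) (H c) c := by
  rw [hasDerivAt_iff_isLittleO]
  have h1 : (fun y : ℝ => H y - H c) =o[nhds c] (fun _ => (1:ℝ)) := by
    rw [isLittleO_one_iff]
    simpa using hH.sub_const (H c)
  have h2 : (fun y : ℝ => (y - c) * (H y - H c)) =o[nhds c] (fun y => (y - c) * 1) :=
    (isBigO_refl (fun y : ℝ => y - c) _).mul_isLittleO h1
  simp only [mul_one] at h2
  refine h2.congr_left (fun y => ?_)
  simp only [smul_eq_mul]
  ring

lemma helper2 {g : ℝ → ℝ} (hg : HasDerivAt g 0 0) :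
    HasDerivAt (fun t => g |t|) 0 0 := by
  rw [hasDerivAt_iff_isLittleO] at hg ⊢
  simp only [sub_zero, smul_zero, sub_zero, abs_zero] at hg ⊢
  have habs : Filter.Tendsto (fun t : ℝ => |t|) (nhds 0) (nhds 0) := by
    simpa using continuous_abs.tendsto (0:ℝ)
  have := hg.comp_tendsto habs
  refine this.trans_isBigO ?_
  rw [isBigO_iff]
  exact ⟨1, by filter_upwards with t; simp⟩

lemma hexp (c t : ℝ) : HasDerivAt (fun s : ℝ => Real.exp (-(c*s))) (Real.exp (-(c*t)) * (-c)) t := by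
  have h1 : HasDerivAt (fun s : ℝ => -(c*s)) (-c) t := by
    exact ((hasDerivAt_id t).const_mul c).neg.congr_deriv (by simp)
  simpa using h1.exp

lemma smooth1 (c b t : ℝ) :
    HasDerivAt (fun s : ℝ => (1 + c*s + b*s^2) * Real.exp (-(c*s)))
      (t * ((2*b - c^2 - c*b*t) * Real.exp (-(c*t)))) t := by
  have hp : HasDerivAt (fun s : ℝ => 1 + c*s + b*s^2) (c + b*(2*t)) t := by
    have := (((hasDerivAt_id t).const_mul c).const_add 1).add ((hasDerivAt_pow 2 t).const_mul b)
    exact this.congr_deriv (by simp)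
  have := hp.mul (hexp c t)
  exact this.congr_deriv (by ring)

lemma smooth2 (c b t : ℝ) :
    HasDerivAt (fun s : ℝ => s * ((2*b - c^2 - c*b*s) * Real.exp (-(c*s))))
      ((2*b - c^2 + (c^3 - 4*c*b)*t + c^2*b*t^2) * Real.exp (-(c*t))) t := by
  have hp : HasDerivAt (fun s : ℝ => 2*b - c^2 - c*b*s) (-(c*b)) t := by
    simpa using ((hasDerivAt_id t).const_mul (c*b)).const_sub (2*b - c^2)
  have := (hasDerivAt_id t).mul (hp.mul (hexp c t))
  simp only [id_eq] at this
  exact this.congr_deriv (by simp only [Pi.mul_apply]; ring)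

lemma matA (a b t : ℝ) :
    HasDerivAt (fun s : ℝ => (1 + a*|s| + b*s^2) * Real.exp (-(a*|s|)))
      (t * ((2*b - a^2 - a*b*|t|) * Real.exp (-(a*|t|)))) t := by
  rcases lt_trichotomy t 0 with ht | ht | ht
  · have hev : (fun s : ℝ => (1 + a*|s| + b*s^2) * Real.exp (-(a*|s|))) =ᶠ[nhds t]
        (fun s : ℝ => (1 + (-a)*s + b*s^2) * Real.exp (-((-a)*s))) := by
      filter_upwards [Iio_mem_nhds ht] with s hs
      have hs' : s < 0 := hs
      simp only [abs_of_neg hs', mul_neg, neg_mul, neg_neg]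
    rw [abs_of_neg ht]
    refine ((smooth1 (-a) b t).congr_of_eventuallyEq hev).congr_deriv ?_
    rw [show -(-a*t) = -(a * -t) by ring]
    ring
  · subst ht
    have hg0 : HasDerivAt (fun s : ℝ => (1 + a*s + b*s^2) * Real.exp (-(a*s))) 0 0 := by
      simpa using smooth1 a b 0
    have h := helper2 hg0
    have heq : (fun s : ℝ => (1 + a*|s| + b*s^2) * Real.exp (-(a*|s|)))
        = (fun s : ℝ => (1 + a*|s| + b*|s|^2) * Real.exp (-(a*|s|))) := by
      funext s; rw [sq_abs]
    rw [heq]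
    simpa using h
  · have hev : (fun s : ℝ => (1 + a*|s| + b*s^2) * Real.exp (-(a*|s|))) =ᶠ[nhds t]
        (fun s : ℝ => (1 + a*s + b*s^2) * Real.exp (-(a*s))) := by
      filter_upwards [Ioi_mem_nhds ht] with s hs
      rw [abs_of_pos hs]
    rw [abs_of_pos ht]
    exact (smooth1 a b t).congr_of_eventuallyEq hev

lemma matB (a b t : ℝ) :
    HasDerivAt (fun s : ℝ => s * ((2*b - a^2 - a*b*|s|) * Real.exp (-(a*|s|))))
      ((2*b - a^2 + (a^3 - 4*a*b)*|t| + a^2*b*t^2) * Real.exp (-(a*|t|))) t := by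
  rcases lt_trichotomy t 0 with ht | ht | ht
  · have hev : (fun s : ℝ => s * ((2*b - a^2 - a*b*|s|) * Real.exp (-(a*|s|)))) =ᶠ[nhds t]
        (fun s : ℝ => s * ((2*b - (-a)^2 - (-a)*b*s) * Real.exp (-((-a)*s)))) := by
      filter_upwards [Iio_mem_nhds ht] with s hs
      have hs' : s < 0 := hs
      simp only [abs_of_neg hs', mul_neg, neg_mul, neg_neg, neg_sq]
    rw [abs_of_neg ht]
    refine ((smooth2 (-a) b t).congr_of_eventuallyEq hev).congr_deriv ?_
    rw [show -(-a*t) = -(a * -t) by ring]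
    ring
  · subst ht
    have hH : ContinuousAt (fun s : ℝ => (2*b - a^2 - a*b*|s|) * Real.exp (-(a*|s|))) 0 := by
      fun_prop
    have h := helper1 hH
    simp only [sub_zero] at h
    refine h.congr_deriv ?_
    simp
  · have hev : (fun s : ℝ => s * ((2*b - a^2 - a*b*|s|) * Real.exp (-(a*|s|)))) =ᶠ[nhds t]
        (fun s : ℝ => s * ((2*b - a^2 - a*b*s) * Real.exp (-(a*s)))) := by
      filter_upwards [Ioi_mem_nhds ht] with s hs
      rw [abs_of_pos hs]
    rw [abs_of_pos ht]
    exact (smooth2 a b t).congr_of_eventuallyEq hev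

/-- With `d = |x_D − x*|`, the second derivative of `y ↦ f_γ (x_D − y)` at `x*` equals
`(5/(3γ²)) (5d²/γ² − 1 − √5 d/γ) exp(−√5 d/γ)`. -/
theorem matern52_cross_second_deriv (γ : ℝ) (hγ : 0 < γ) (xD xstar : ℝ)
    (d : ℝ) (hd : d = |xD - xstar|) :
    deriv (deriv (fun y => matern52 γ (xD - y))) xstar =
      (5 / (3 * γ ^ 2)) * (5 * d ^ 2 / γ ^ 2 - 1 - Real.sqrt 5 * d / γ)
        * Real.exp (-(Real.sqrt 5 * d / γ)) := by
  have h5 : Real.sqrt 5 ^ 2 = 5 := Real.sq_sqrt (by norm_num)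
  set a := Real.sqrt 5 / γ with ha
  set b := (5:ℝ) / (3*γ^2) with hb
  have hmat : matern52 γ = fun s : ℝ => (1 + a*|s| + b*s^2) * Real.exp (-(a*|s|)) := by
    funext s
    unfold matern52
    rw [show Real.sqrt 5 * |s| / γ = a * |s| by rw [ha]; ring,
        show 5 * s^2/(3*γ^2) = b * s^2 by rw [hb]; ring]
  have hinner : ∀ y : ℝ, HasDerivAt (fun y : ℝ => xD - y) (-1) y := fun y => by
    simpa using (hasDerivAt_id y).const_sub xD
  have hF : deriv (fun y => matern52 γ (xD - y))
      = fun y => -((xD - y) * ((2*b - a^2 - a*b*|xD - y|) * Real.exp (-(a*|xD - y|)))) := by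
    funext y
    have h1 : HasDerivAt (fun y => matern52 γ (xD - y))
        (((xD - y) * ((2*b - a^2 - a*b*|xD - y|) * Real.exp (-(a*|xD - y|)))) * (-1)) y := by
      rw [hmat]
      exact (matA a b (xD - y)).comp y (hinner y)
    rw [h1.deriv]; ring
  rw [hF]
  have h2 : HasDerivAt
      (fun y => -((xD - y) * ((2*b - a^2 - a*b*|xD - y|) * Real.exp (-(a*|xD - y|)))))
      ((2*b - a^2 + (a^3 - 4*a*b)*|xD - xstar| + a^2*b*(xD - xstar)^2)
        * Real.exp (-(a*|xD - xstar|))) xstar := by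
    have := ((matB a b (xD - xstar)).comp xstar (hinner xstar)).neg
    exact this.congr_deriv (by ring)
  rw [h2.deriv, ← hd, show (xD - xstar)^2 = d^2 by rw [hd, sq_abs],
      show -(a*d) = -(Real.sqrt 5 * d / γ) by rw [ha]; ring]
  rw [ha, hb]
  have hγ' : γ ≠ 0 := hγ.ne'
  field_simp
  ring_nf
  linear_combination (3*γ*Real.sqrt 5*d - 3*γ^2 + 5*d^2)*h5
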